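/- Let 0 < c < π/2 be fixed. Then for all x ∈ (0, c), x < (2/3)·sin(x) + (1/3)·tan(x) < ((2/3)·sin(c) + (1/3)·tan(c))/c · x. -/

import Mathlib

open Real

private lemma cos_pos_of_Ico {x : ℝ} (hx : x ∈ Set.Ico 0 (π/2)) : 0 < Real.cos x :=
  Real.cos_pos_of_mem_Ioo ⟨lt_of_lt_of_le (by linarith [Real.pi_pos]) hx.1, hx.2⟩

private lemma cos_lt_one' {x : ℝ} (hx0 : 0 < x) (hx2 : x < π/2) : Real.cos x < 1 := by
  have hs : 0 < Real.sin x :=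
    Real.sin_pos_of_pos_of_lt_pi hx0 (by linarith [Real.pi_pos])
  have hc : 0 < Real.cos x := cos_pos_of_Ico ⟨hx0.le, hx2⟩
  nlinarith [Real.sin_sq_add_cos_sq x]

private lemma hasDerivF {x : ℝ} (hx : Real.cos x ≠ 0) :
    HasDerivAt (fun y => 2/3 * Real.sin y + 1/3 * Real.tan y)
      (2/3 * Real.cos x + 1/3 * (1 / Real.cos x ^ 2)) x :=
  ((Real.hasDerivAt_sin x).const_mul (2/3:ℝ)).add ((Real.hasDerivAt_tan hx).const_mul (1/3:ℝ))

private lemma contF : ContinuousOn (fun y => 2/3 * Real.sin y + 1/3 * Real.tan y)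
    (Set.Ico 0 (π/2)) := by
  apply ContinuousOn.add
  · exact continuousOn_const.mul Real.continuous_sin.continuousOn
  · apply continuousOn_const.mul
    apply Real.continuousOn_tan.mono
    intro y hy
    exact (cos_pos_of_Ico hy).ne'

private lemma part1 {x : ℝ} (hx0 : 0 < x) (hx2 : x < π/2) :
    x < 2/3 * Real.sin x + 1/3 * Real.tan x := by
  have hmono : StrictMonoOn (fun y => 2/3 * Real.sin y + 1/3 * Real.tan y - y)
      (Set.Ico 0 (π/2)) := by
    apply strictMonoOn_of_deriv_pos (convex_Ico 0 (π/2))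
    · exact contF.sub continuousOn_id
    · intro y hy
      rw [interior_Ico] at hy
      have hcy : 0 < Real.cos y := cos_pos_of_Ico ⟨hy.1.le, hy.2⟩
      have hcy1 : Real.cos y < 1 := cos_lt_one' hy.1 hy.2
      have hd : HasDerivAt (fun y => 2/3 * Real.sin y + 1/3 * Real.tan y - y)
          (2/3 * Real.cos y + 1/3 * (1 / Real.cos y ^ 2) - 1) y :=
        (hasDerivF hcy.ne').sub (hasDerivAt_id y)
      rw [hd.deriv]
      have he : 2/3 * Real.cos y + 1/3 * (1 / Real.cos y ^ 2) - 1
          = (Real.cos y - 1)^2 * (2 * Real.cos y + 1) / (3 * Real.cos y ^ 2) := by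
        field_simp
        ring
      rw [he]
      apply div_pos (by nlinarith) (by positivity)
  have := hmono (Set.left_mem_Ico.mpr (by linarith [Real.pi_pos]))
      ⟨hx0.le, hx2⟩ hx0
  simp at this
  linarith

private lemma convexF {c : ℝ} (hc : 0 < c) (hc' : c < π/2) :
    StrictConvexOn ℝ (Set.Icc 0 c)
      (fun y => 2/3 * Real.sin y + 1/3 * Real.tan y) := by
  apply strictConvexOn_of_deriv2_pos (convex_Icc 0 c)
    (contF.mono (Set.Icc_subset_Ico_right hc'))
  intro y hy
  rw [interior_Icc] at hy
  have hy2 : y < π/2 := by linarith [hy.2]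
  have hcy : 0 < Real.cos y := cos_pos_of_Ico ⟨hy.1.le, hy2⟩
  have hcy1 : Real.cos y < 1 := cos_lt_one' hy.1 hy2
  have hsy : 0 < Real.sin y :=
    Real.sin_pos_of_pos_of_lt_pi hy.1 (by linarith [Real.pi_pos])
  have hopen : IsOpen {z : ℝ | Real.cos z ≠ 0} := isOpen_ne.preimage Real.continuous_cos
  have heq : deriv (fun y => 2/3 * Real.sin y + 1/3 * Real.tan y) =ᶠ[nhds y]
      (fun z => 2/3 * Real.cos z + 1/3 * (1 / Real.cos z ^ 2)) := by
    filter_upwards [hopen.mem_nhds (by exact hcy.ne' : Real.cos y ≠ 0)] with z hz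
    exact (hasDerivF hz).deriv
  have hg : HasDerivAt (fun z => 2/3 * Real.cos z + 1/3 * (1 / Real.cos z ^ 2))
      (2/3 * (-Real.sin y) + 1/3 * (-(2 * Real.cos y ^ 1 * (-Real.sin y)) / (Real.cos y ^ 2) ^ 2)) y := by
    have h1 : HasDerivAt (fun z => Real.cos z ^ 2) (2 * Real.cos y ^ 1 * (-Real.sin y)) y :=
      (Real.hasDerivAt_cos y).pow 2
    have h2 := h1.inv (by positivity)
    have h3 : HasDerivAt (fun z => 1 / Real.cos z ^ 2)
        (-(2 * Real.cos y ^ 1 * (-Real.sin y)) / (Real.cos y ^ 2) ^ 2) y := by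
      simpa [one_div, Pi.inv_def] using h2
    exact ((Real.hasDerivAt_cos y).const_mul (2/3:ℝ)).add (h3.const_mul (1/3:ℝ))
  have hder : deriv^[2] (fun y => 2/3 * Real.sin y + 1/3 * Real.tan y) y
      = 2/3 * (-Real.sin y) + 1/3 * (-(2 * Real.cos y ^ 1 * (-Real.sin y)) / (Real.cos y ^ 2) ^ 2) := by
    simp only [Function.iterate_succ, Function.iterate_zero, Function.comp_apply, id_eq]
    rw [heq.deriv_eq]
    exact hg.deriv
  rw [hder]
  have he : 2/3 * (-Real.sin y) + 1/3 * (-(2 * Real.cos y ^ 1 * (-Real.sin y)) / (Real.cos y ^ 2) ^ 2)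
      = 2 * Real.sin y * (1 - Real.cos y ^ 3) / (3 * Real.cos y ^ 3) := by
    field_simp
    ring
  rw [he]
  apply div_pos
  · have : Real.cos y ^ 3 < 1 := by nlinarith
    nlinarith
  · positivity

theorem huygens_linear_bounds (c : ℝ) (hc : 0 < c) (hc' : c < π / 2)
    (x : ℝ) (hx : x ∈ Set.Ioo 0 c) :
    x < (2 / 3) * sin x + (1 / 3) * tan x ∧
    (2 / 3) * sin x + (1 / 3) * tan x < ((2 / 3) * sin c + (1 / 3) * tan c) / c * x := by
  obtain ⟨hx0, hxc⟩ := hx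
  refine ⟨part1 hx0 (by linarith), ?_⟩
  have hconv := convexF hc hc'
  have h0 : (0:ℝ) ∈ Set.Icc 0 c := Set.left_mem_Icc.mpr hc.le
  have hcm : c ∈ Set.Icc 0 c := Set.right_mem_Icc.mpr hc.le
  have ha : 0 < 1 - x / c := by
    rw [sub_pos, div_lt_one hc]; exact hxc
  have hb : 0 < x / c := div_pos hx0 hc
  have key := hconv.2 h0 hcm hc.ne ha hb (by ring)
  simp only [smul_eq_mul, mul_zero, Real.sin_zero, Real.tan_zero] at key
  have hxeq : (0:ℝ) + x/c * c = x := by field_simp; ring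
  rw [hxeq] at key
  calc 2/3 * Real.sin x + 1/3 * Real.tan x
      < (1 - x/c) * (0 + 0) + x/c * (2/3 * Real.sin c + 1/3 * Real.tan c) := key
    _ = (2/3 * Real.sin c + 1/3 * Real.tan c) / c * x := by field_simp; ring
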